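/- Consider the lateral error dynamics ỹ' = sin θ̃, θ̃' = -k₁·ỹ·(sin θ̃)/θ̃ - k₂·θ̃ - k₃·(1/d_L + 1/d_R)·sin θ̃, where d_L = w - ỹ - ε_w, d_R = w + ỹ - ε_w with w > ε_w > 0, and k₁, k₂, k₃ > 0. Then along trajectories with d_L > 0, d_R > 0, and |θ̃| ≤ π/2, the function L = (1/2)k₁ỹ² + (1/2)θ̃² satisfies L' = -k₂θ̃² - k₃(1/d_L + 1/d_R)·θ̃·sin θ̃ ≤ 0. -/

import Mathlib

open Real

/-- Lateral Lyapunov dissipation: along the lateral error dynamics with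
barrier feedback, L = (1/2)k₁ỹ² + (1/2)θ̃² satisfies
L' = -k₂θ̃² - k₃(1/d_L + 1/d_R)·θ̃·sin θ̃ ≤ 0 whenever d_L, d_R > 0 and
|θ̃| ≤ π/2. -/
theorem stmt_7
    (y θ : ℝ → ℝ) (k₁ k₂ k₃ w εw : ℝ)
    (hk₁ : 0 < k₁) (hk₂ : 0 < k₂) (hk₃ : 0 < k₃)
    (hw : εw < w) (hεw : 0 < εw)
    (hy : ∀ t, HasDerivAt y (Real.sin (θ t)) t)
    (hθ : ∀ t, HasDerivAt θ
      (-k₁ * y t * (Real.sin (θ t) / θ t) - k₂ * θ t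
        - k₃ * (1 / (w - y t - εw) + 1 / (w + y t - εw)) * Real.sin (θ t)) t) :
    ∀ t, w - y t - εw > 0 → w + y t - εw > 0 → |θ t| ≤ π / 2 →
      HasDerivAt (fun t => (1/2) * k₁ * (y t)^2 + (1/2) * (θ t)^2)
        (-k₂ * (θ t)^2
          - k₃ * (1 / (w - y t - εw) + 1 / (w + y t - εw))
              * θ t * Real.sin (θ t)) t ∧
      -k₂ * (θ t)^2
        - k₃ * (1 / (w - y t - εw) + 1 / (w + y t - εw))
            * θ t * Real.sin (θ t) ≤ 0 := by
  intro t hL hR hθhalf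
  set dL := w - y t - εw with hdL
  set dR := w + y t - εw with hdR
  have hderiv : HasDerivAt (fun t => (1/2) * k₁ * (y t)^2 + (1/2) * (θ t)^2)
      (-k₂ * (θ t)^2 - k₃ * (1 / dL + 1 / dR) * θ t * Real.sin (θ t)) t := by
    have h1 := ((hy t).pow 2).const_mul ((1:ℝ)/2 * k₁)
    have h2 := ((hθ t).pow 2).const_mul ((1:ℝ)/2)
    have := h1.add h2
    refine this.congr_deriv ?_
    rcases eq_or_ne (θ t) 0 with h0 | h0
    · simp [h0]
    · rw [hdL, hdR]
      field_simp
      ring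
  refine ⟨hderiv, ?_⟩
  have hts : 0 ≤ θ t * Real.sin (θ t) := by
    rcases le_or_gt 0 (θ t) with h | h
    · exact mul_nonneg h (Real.sin_nonneg_of_nonneg_of_le_pi h
        (by linarith [abs_le.mp hθhalf, Real.pi_pos]))
    · have : Real.sin (θ t) ≤ 0 := by
        have := Real.sin_nonneg_of_nonneg_of_le_pi (x := -θ t) (by linarith)
          (by have := abs_le.mp hθhalf; linarith [Real.pi_pos])
        rw [Real.sin_neg] at this; linarith
      nlinarith [h.le, this]
  have h1 : 0 ≤ 1 / dL + 1 / dR := by positivity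
  nlinarith [sq_nonneg (θ t), mul_nonneg (mul_nonneg hk₃.le h1) hts]
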